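/- Let P and Q be 2-dimensional vector subspaces of R^4 (with the standard Euclidean inner product) intersecting trivially (P ∩ Q = {0}). Then there exist 2-dimensional subspaces τ₁ and τ₂ that are orthogonal complements of each other in R^4 such that τ₁ ∩ P, τ₁ ∩ Q, τ₂ ∩ P, τ₂ ∩ Q are each 1-dimensional, and τ₁ is orthogonal to P along τ₁ ∩ P and to Q along τ₁ ∩ Q (and similarly for τ₂). Concretely: there exist orthonormal bases {v_P, w_P} of P and {v_Q, w_Q} of Q with ⟨v_P, w_Q⟩ = ⟨v_Q, w_P⟩ = 0, and one may take τ₁ = span{v_P, v_Q}, τ₂ = span{w_P, w_Q}. -/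

import Mathlib

open scoped RealInnerProductSpace

open Submodule Module

/-- In a 2-dimensional real inner product space, there is a unit vector orthogonal to any
given vector. -/
lemma aux_exists_unit_orthogonal {F : Type*} [NormedAddCommGroup F] [InnerProductSpace ℝ F]
    [FiniteDimensional ℝ F] (hF : Module.finrank ℝ F = 2) (a : F) :
    ∃ v : F, ‖v‖ = 1 ∧ ⟪v, a⟫ = 0 := by
  have hne : ((ℝ ∙ a)ᗮ : Submodule ℝ F) ≠ ⊥ := by
    intro h
    have h1 := Submodule.finrank_add_finrank_orthogonal (K := (ℝ ∙ a : Submodule ℝ F))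
    rw [h, finrank_bot, hF, add_zero] at h1
    have h2 : Module.finrank ℝ (ℝ ∙ a : Submodule ℝ F) ≤ 1 := by
      by_cases ha : a = 0
      · rw [ha, Submodule.span_zero_singleton]; simp
      · rw [finrank_span_singleton ha]
    omega
  obtain ⟨x, hx, hx0⟩ := Submodule.exists_mem_ne_zero_of_ne_bot hne
  refine ⟨‖x‖⁻¹ • x, norm_smul_inv_norm (𝕜 := ℝ) hx0, ?_⟩
  rw [real_inner_smul_left, Submodule.mem_orthogonal_singleton_iff_inner_left.mp hx, mul_zero]

/-- In a 2-dimensional real inner product space, given orthogonal `a b`, there is an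
orthonormal pair `v w` with `v ⊥ b` and `w ⊥ a`. -/
lemma aux_pair {F : Type*} [NormedAddCommGroup F] [InnerProductSpace ℝ F]
    [FiniteDimensional ℝ F] (hF : Module.finrank ℝ F = 2) (a b : F) (hab : ⟪a, b⟫ = 0) :
    ∃ v w : F, ‖v‖ = 1 ∧ ‖w‖ = 1 ∧ ⟪v, w⟫ = 0 ∧ ⟪v, b⟫ = 0 ∧ ⟪w, a⟫ = 0 := by
  by_cases hb : b = 0
  · obtain ⟨w, hw1, hwa⟩ := aux_exists_unit_orthogonal hF a
    obtain ⟨v, hv1, hvw⟩ := aux_exists_unit_orthogonal hF w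
    exact ⟨v, w, hv1, hw1, hvw, by simp [hb], hwa⟩
  · obtain ⟨v, hv1, hvb⟩ := aux_exists_unit_orthogonal hF b
    obtain ⟨w, hw1, hwv⟩ := aux_exists_unit_orthogonal hF v
    have hv0 : v ≠ 0 := by intro h; rw [h, norm_zero] at hv1; norm_num at hv1
    -- `a` lies in the line `(ℝ ∙ b)ᗮ = ℝ ∙ v`
    have hK : Module.finrank ℝ ((ℝ ∙ b)ᗮ : Submodule ℝ F) = 1 := by
      have h1 := Submodule.finrank_add_finrank_orthogonal (K := (ℝ ∙ b : Submodule ℝ F))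
      rw [finrank_span_singleton hb, hF] at h1
      omega
    have hvK : (ℝ ∙ v : Submodule ℝ F) ≤ (ℝ ∙ b)ᗮ := by
      rw [Submodule.span_singleton_le_iff_mem]
      exact Submodule.mem_orthogonal_singleton_iff_inner_left.mpr hvb
    have hEq : (ℝ ∙ v : Submodule ℝ F) = (ℝ ∙ b)ᗮ :=
      Submodule.eq_of_le_of_finrank_eq hvK (by rw [hK, finrank_span_singleton hv0])
    have haK : a ∈ ((ℝ ∙ b)ᗮ : Submodule ℝ F) :=
      Submodule.mem_orthogonal_singleton_iff_inner_left.mpr hab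
    rw [← hEq, Submodule.mem_span_singleton] at haK
    obtain ⟨c, rfl⟩ := haK
    exact ⟨v, w, hv1, hw1, by rw [real_inner_comm]; exact hwv, hvb,
      by rw [real_inner_smul_right, hwv, mul_zero]⟩

/-- If `P ⊓ Q = ⊥`, `u ∈ P`, `z ∈ Q`, `z ≠ 0`, then `span {u, z} ⊓ P = span {u}`. -/
lemma aux_inf {E : Type*} [AddCommGroup E] [Module ℝ E] {P Q : Submodule ℝ E}
    (hPQ : P ⊓ Q = ⊥) {u z : E} (hu : u ∈ P) (hz : z ∈ Q) (hz0 : z ≠ 0) :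
    Submodule.span ℝ {u, z} ⊓ P = Submodule.span ℝ {u} := by
  apply le_antisymm
  · rintro x ⟨hx1, hx2⟩
    obtain ⟨a, b, rfl⟩ := Submodule.mem_span_pair.mp hx1
    have hbz : b • z ∈ P ⊓ Q := by
      constructor
      · have : b • z = (a • u + b • z) - a • u := by abel
        rw [this]
        exact P.sub_mem hx2 (P.smul_mem a hu)
      · exact Q.smul_mem b hz
    rw [hPQ, Submodule.mem_bot, smul_eq_zero] at hbz
    rcases hbz with rfl | rfl
    · rw [zero_smul, add_zero]
      exact Submodule.smul_mem _ a (Submodule.mem_span_singleton_self u)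
    · exact absurd rfl hz0
  · refine le_inf ?_ ?_
    · exact Submodule.span_mono (Set.singleton_subset_iff.mpr (Set.mem_insert u {z}))
    · rw [Submodule.span_singleton_le_iff_mem]; exact hu

lemma inner_orthogonalProjection_left_eq_right {F : Type*} [NormedAddCommGroup F]
    [InnerProductSpace ℝ F] (K : Submodule ℝ F) [K.HasOrthogonalProjection] (u v : F) :
    ⟪(orthogonalProjection K u : F), v⟫ = ⟪u, (orthogonalProjection K v : F)⟫ := by
  have := inner_starProjection_left_eq_right K u v
  simpa only [Submodule.starProjection_apply] using this

lemma orthogonalProjection_inner_eq_zero {F : Type*} [NormedAddCommGroup F]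
    [InnerProductSpace ℝ F] {K : Submodule ℝ F} [K.HasOrthogonalProjection] (v w : F)
    (hw : w ∈ K) : ⟪v - (orthogonalProjection K v : F), w⟫ = 0 := by
  have := Submodule.starProjection_inner_eq_zero (K := K) v w hw
  simpa only [Submodule.starProjection_apply] using this

/-- If `P` and `Q` are 2-dimensional subspaces of `ℝ⁴` intersecting trivially,
then there are orthonormal bases `{v_P, w_P}` of `P` and `{v_Q, w_Q}` of `Q` with
`⟪v_P, w_Q⟫ = ⟪v_Q, w_P⟫ = 0`, such that `τ₁ = span {v_P, v_Q}` and `τ₂ = span {w_P, w_Q}` are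
orthogonal complements of each other and each meets `P` and `Q` in a 1-dimensional subspace. -/
theorem exists_orthogonal_invariant_planes
    (P Q : Submodule ℝ (EuclideanSpace ℝ (Fin 4)))
    (hP : Module.finrank ℝ P = 2) (hQ : Module.finrank ℝ Q = 2)
    (hPQ : P ⊓ Q = ⊥) :
    ∃ vP wP vQ wQ : EuclideanSpace ℝ (Fin 4),
      vP ∈ P ∧ wP ∈ P ∧ vQ ∈ Q ∧ wQ ∈ Q ∧
      ‖vP‖ = 1 ∧ ‖wP‖ = 1 ∧ ‖vQ‖ = 1 ∧ ‖wQ‖ = 1 ∧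
      ⟪vP, wP⟫ = 0 ∧ ⟪vQ, wQ⟫ = 0 ∧
      ⟪vP, wQ⟫ = 0 ∧ ⟪vQ, wP⟫ = 0 ∧
      Submodule.span ℝ {wP, wQ} = (Submodule.span ℝ {vP, vQ})ᗮ ∧
      Module.finrank ℝ (Submodule.span ℝ {vP, vQ} ⊓ P :
        Submodule ℝ (EuclideanSpace ℝ (Fin 4))) = 1 ∧
      Module.finrank ℝ (Submodule.span ℝ {vP, vQ} ⊓ Q :
        Submodule ℝ (EuclideanSpace ℝ (Fin 4))) = 1 ∧
      Module.finrank ℝ (Submodule.span ℝ {wP, wQ} ⊓ P :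
        Submodule ℝ (EuclideanSpace ℝ (Fin 4))) = 1 ∧
      Module.finrank ℝ (Submodule.span ℝ {wP, wQ} ⊓ Q :
        Submodule ℝ (EuclideanSpace ℝ (Fin 4))) = 1 := by
  classical
  set E := EuclideanSpace ℝ (Fin 4)
  -- The symmetric operator `x ↦ proj_P (proj_Q x)` on `P`
  let T : ↥P →ₗ[ℝ] ↥P :=
    ((orthogonalProjection P).comp ((Q.subtypeL).comp
      ((orthogonalProjection Q).comp P.subtypeL))).toLinearMap
  have hT : T.IsSymmetric := by
    intro x y
    have e1 : ∀ z w : ↥P, (⟪z, w⟫ : ℝ) = ⟪(z : E), (w : E)⟫ := fun z w => rfl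
    show (⟪orthogonalProjection P ((orthogonalProjection Q (x : E) : E)), y⟫ : ℝ) =
      ⟪x, orthogonalProjection P ((orthogonalProjection Q (y : E) : E))⟫
    rw [e1, e1, inner_orthogonalProjection_left_eq_right,
      orthogonalProjection_mem_subspace_eq_self y,
      ← inner_orthogonalProjection_left_eq_right P (x : E),
      orthogonalProjection_mem_subspace_eq_self x,
      inner_orthogonalProjection_left_eq_right]
  let e := hT.eigenvectorBasis hP
  set vP : E := (e 0 : E) with hvP_def
  set wP : E := (e 1 : E) with hwP_def
  have hvPmem : vP ∈ P := (e 0).2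
  have hwPmem : wP ∈ P := (e 1).2
  have hvPnorm : ‖vP‖ = 1 := e.orthonormal.1 0
  have hwPnorm : ‖wP‖ = 1 := e.orthonormal.1 1
  have hvPwP : ⟪vP, wP⟫ = 0 := e.orthonormal.2 (by decide : (0 : Fin 2) ≠ 1)
  -- key orthogonality from eigenvectors
  have key : ∀ i j : Fin 2, i ≠ j →
      ⟪((e i : E)), ((orthogonalProjection Q (e j : E) : Q) : E)⟫ = 0 := by
    intro i j hij
    have h1 : ((orthogonalProjection P
        ((orthogonalProjection Q (e j : E) : Q) : E) : P)) = T (e j) := rfl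
    have h2 := (hT.hasEigenvector_eigenvectorBasis hP j).apply_eq_smul
    calc ⟪((e i : E)), ((orthogonalProjection Q (e j : E) : Q) : E)⟫
        = ⟪((orthogonalProjection P (e i : E) : P) : E),
            ((orthogonalProjection Q (e j : E) : Q) : E)⟫ := by
          rw [orthogonalProjection_mem_subspace_eq_self (e i)]
      _ = ⟪((e i : E)), ((orthogonalProjection P
            ((orthogonalProjection Q (e j : E) : Q) : E) : P) : E)⟫ :=
          inner_orthogonalProjection_left_eq_right P _ _
      _ = ⟪((e i : E)), ((T (e j) : ↥P) : E)⟫ := by rw [h1]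
      _ = 0 := by
          rw [h2]
          push_cast [Submodule.coe_smul]
          rw [real_inner_smul_right]
          have : (⟪(e i : E), (e j : E)⟫ : ℝ) = 0 := e.orthonormal.2 hij
          rw [this, mul_zero]
  set q1 : ↥Q := orthogonalProjection Q vP with hq1_def
  set q2 : ↥Q := orthogonalProjection Q wP with hq2_def
  have hvPq2 : ⟪vP, (q2 : E)⟫ = 0 := key 0 1 (by decide)
  have hwPq1 : ⟪wP, (q1 : E)⟫ = 0 := key 1 0 (by decide)
  have hq12 : (⟪q1, q2⟫ : ℝ) = 0 := by
    have h3 : (⟪q1, q2⟫ : ℝ) = ⟪(q1 : E), (q2 : E)⟫ := rfl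
    have h4 : ⟪vP - (q1 : E), (q2 : E)⟫ = 0 :=
      orthogonalProjection_inner_eq_zero vP (q2 : E) q2.2
    rw [inner_sub_left] at h4
    rw [h3]
    linarith [hvPq2]
  have hQfin : Module.finrank ℝ ↥Q = 2 := hQ
  obtain ⟨v, w, hv1, hw1, hvw, hvq2, hwq1⟩ := aux_pair hQfin q1 q2 hq12
  set vQ : E := (v : E) with hvQ_def
  set wQ : E := (w : E) with hwQ_def
  have hvQmem : vQ ∈ Q := v.2
  have hwQmem : wQ ∈ Q := w.2
  have hvQnorm : ‖vQ‖ = 1 := hv1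
  have hwQnorm : ‖wQ‖ = 1 := hw1
  have hvQwQ : ⟪vQ, wQ⟫ = 0 := hvw
  -- cross orthogonality
  have hvPwQ : ⟪vP, wQ⟫ = 0 := by
    have h4 : ⟪vP - (q1 : E), wQ⟫ = 0 :=
      orthogonalProjection_inner_eq_zero vP wQ hwQmem
    rw [inner_sub_left] at h4
    have h5 : ⟪(q1 : E), wQ⟫ = 0 := by rw [real_inner_comm]; exact hwq1
    linarith
  have hvQwP : ⟪vQ, wP⟫ = 0 := by
    have h4 : ⟪wP - (q2 : E), vQ⟫ = 0 :=
      orthogonalProjection_inner_eq_zero wP vQ hvQmem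
    rw [inner_sub_left] at h4
    have h5 : ⟪(q2 : E), vQ⟫ = 0 := by rw [real_inner_comm]; exact hvq2
    rw [real_inner_comm]
    linarith
  -- nonzeroness
  have hvP0 : vP ≠ 0 := by intro h; rw [h, norm_zero] at hvPnorm; norm_num at hvPnorm
  have hwP0 : wP ≠ 0 := by intro h; rw [h, norm_zero] at hwPnorm; norm_num at hwPnorm
  have hvQ0 : vQ ≠ 0 := by intro h; rw [h, norm_zero] at hvQnorm; norm_num at hvQnorm
  have hwQ0 : wQ ≠ 0 := by intro h; rw [h, norm_zero] at hwQnorm; norm_num at hwQnorm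
  have hQP : Q ⊓ P = ⊥ := by rw [inf_comm]; exact hPQ
  -- linear independence and span dimensions
  have hindep : ∀ (x y : E), x ∈ P → y ∈ Q → x ≠ 0 → y ≠ 0 →
      Module.finrank ℝ (Submodule.span ℝ {x, y} : Submodule ℝ E) = 2 := by
    intro x y hx hy hx0 hy0
    have li : LinearIndependent ℝ ![x, y] := by
      rw [LinearIndependent.pair_iff' hx0]
      intro a ha
      have : y ∈ P ⊓ Q := ⟨ha ▸ P.smul_mem a hx, hy⟩
      rw [hPQ, Submodule.mem_bot] at this
      exact hy0 this
    have hrange : Set.range ![x, y] = {x, y} := by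
      ext z
      simp [Matrix.range_cons, Matrix.range_empty, or_comm]
    have := finrank_span_eq_card li
    rw [hrange] at this
    rw [this]
    simp
  have hspanV : Module.finrank ℝ (Submodule.span ℝ {vP, vQ} : Submodule ℝ E) = 2 :=
    hindep vP vQ hvPmem hvQmem hvP0 hvQ0
  have hspanW : Module.finrank ℝ (Submodule.span ℝ {wP, wQ} : Submodule ℝ E) = 2 :=
    hindep wP wQ hwPmem hwQmem hwP0 hwQ0
  -- orthogonal complement
  have hperp : Submodule.span ℝ {wP, wQ} ≤ (Submodule.span ℝ {vP, vQ})ᗮ := by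
    rw [Submodule.span_le]
    intro x hx
    have hgen : ∀ z : E, ⟪vP, z⟫ = 0 → ⟪vQ, z⟫ = 0 →
        z ∈ (Submodule.span ℝ {vP, vQ})ᗮ := by
      intro z h1 h2
      rw [Submodule.mem_orthogonal]
      intro u hu
      obtain ⟨a, b, rfl⟩ := Submodule.mem_span_pair.mp hu
      rw [inner_add_left, real_inner_smul_left, real_inner_smul_left, h1, h2]
      ring
    simp only [Set.mem_insert_iff, Set.mem_singleton_iff] at hx
    rcases hx with rfl | rfl
    · exact hgen _ hvPwP hvQwP
    · exact hgen _ hvPwQ hvQwQ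
  have hEdim : Module.finrank ℝ E = 4 := by simp [E]
  have horthdim : Module.finrank ℝ ((Submodule.span ℝ {vP, vQ})ᗮ : Submodule ℝ E) = 2 := by
    have h1 := Submodule.finrank_add_finrank_orthogonal
      (K := (Submodule.span ℝ {vP, vQ} : Submodule ℝ E))
    rw [hspanV, hEdim] at h1
    omega
  have hspan_eq : Submodule.span ℝ {wP, wQ} = (Submodule.span ℝ {vP, vQ})ᗮ :=
    Submodule.eq_of_le_of_finrank_eq hperp (by rw [hspanW, horthdim])
  -- intersection dimensions
  have hpair_comm : ∀ x y : E, ({x, y} : Set E) = {y, x} := fun x y => Set.pair_comm x y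
  have d1 : Module.finrank ℝ (Submodule.span ℝ {vP, vQ} ⊓ P : Submodule ℝ E) = 1 := by
    rw [aux_inf hPQ hvPmem hvQmem hvQ0, finrank_span_singleton hvP0]
  have d2 : Module.finrank ℝ (Submodule.span ℝ {vP, vQ} ⊓ Q : Submodule ℝ E) = 1 := by
    rw [hpair_comm vP vQ, aux_inf hQP hvQmem hvPmem hvP0, finrank_span_singleton hvQ0]
  have d3 : Module.finrank ℝ (Submodule.span ℝ {wP, wQ} ⊓ P : Submodule ℝ E) = 1 := by
    rw [aux_inf hPQ hwPmem hwQmem hwQ0, finrank_span_singleton hwP0]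
  have d4 : Module.finrank ℝ (Submodule.span ℝ {wP, wQ} ⊓ Q : Submodule ℝ E) = 1 := by
    rw [hpair_comm wP wQ, aux_inf hQP hwQmem hwPmem hwP0, finrank_span_singleton hwQ0]
  exact ⟨vP, wP, vQ, wQ, hvPmem, hwPmem, hvQmem, hwQmem, hvPnorm, hwPnorm, hvQnorm, hwQnorm,
    hvPwP, hvQwQ, hvPwQ, hvQwP, hspan_eq, d1, d2, d3, d4⟩
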